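/- Let s, ŝ ∈ ℝ with |ŝ - s| ≤ δ, both bounded in absolute value by C_s, and let λ ≥ ln(C_s·n/ε)/ε for ε ∈ (0,1) and n ≥ 1. Then |ReLU_soft(ŝ) - ReLU(s)| ≤ 2ε + δ, where ReLU_soft(u) = u·(n·e^{λu})/(n·e^{λu}+1). -/
import Mathlib


set_option maxHeartbeats 1000000 in
/-- Combined soft-ReLU error: if `|shat - s| ≤ δ`, both are bounded by `C_s`, and
`λ ≥ ln(C_s·n/ε)/ε`, then `|ReLU_soft(shat) - ReLU(s)| ≤ 2ε + δ`. -/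
theorem softrelu_perturbed_approx
    (n : ℕ) (hn : 1 ≤ n) (Cs ε lam δ s shat : ℝ)
    (hCs : 0 < Cs) (hε0 : 0 < ε) (hε1 : ε < 1)
    (hδ : |shat - s| ≤ δ)
    (hs : |s| ≤ Cs) (hshat : |shat| ≤ Cs)
    (hlam : Real.log (Cs * n / ε) / ε ≤ lam) :
    |shat * ((n * Real.exp (lam * shat)) / (n * Real.exp (lam * shat) + 1)) - max s 0|
      ≤ 2 * ε + δ := by
  have hn1 : (1:ℝ) ≤ n := by exact_mod_cast hn
  set E := (n:ℝ) * Real.exp (lam * shat) with hEdef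
  have hEpos : 0 < E := by positivity
  have hD : 0 < E + 1 := by linarith
  have hσ0 : 0 ≤ E / (E + 1) := by positivity
  have hσ1 : E / (E + 1) ≤ 1 := by rw [div_le_one hD]; linarith
  have hshatCs := abs_le.mp hshat
  have key : |shat * (E / (E + 1)) - max shat 0| ≤ ε := by
    rcases le_or_gt (|shat|) ε with hle | hgt
    · -- small shat: crude bound |shat|
      have habs : |shat * (E / (E + 1)) - max shat 0| ≤ |shat| := by
        rcases le_or_gt 0 shat with h | h
        · rw [max_eq_left h, abs_of_nonneg h, abs_le]
          have h1 : 0 ≤ shat * (E / (E + 1)) := mul_nonneg h hσ0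
          have h2 : shat * (E / (E + 1)) ≤ shat := mul_le_of_le_one_right h hσ1
          constructor <;> linarith
        · rw [max_eq_right h.le, sub_zero, abs_mul, abs_of_nonneg hσ0]
          nlinarith [abs_nonneg shat]
      linarith
    · -- large shat: use the λ lower bound
      have hεCs : ε < Cs := lt_of_lt_of_le hgt hshat
      have hpos1 : (0:ℝ) < Cs * n / ε := by positivity
      have h1 : 1 < Cs * n / ε := by
        rw [lt_div_iff₀ hε0]; nlinarith
      have hlogpos : 0 < Real.log (Cs * n / ε) := Real.log_pos h1
      have hlampos : 0 < lam := lt_of_lt_of_le (div_pos hlogpos hε0) hlam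
      have hlog_le : Real.log (Cs * n / ε) ≤ lam * ε := by
        rw [div_le_iff₀ hε0] at hlam; linarith
      have hexp : Cs * n / ε ≤ Real.exp (lam * ε) := by
        calc Cs * n / ε = Real.exp (Real.log (Cs * n / ε)) := (Real.exp_log hpos1).symm
          _ ≤ Real.exp (lam * ε) := Real.exp_le_exp.mpr hlog_le
      have h4 : Cs * n ≤ ε * Real.exp (lam * ε) := by
        rw [div_le_iff₀ hε0] at hexp; linarith
      rcases le_or_gt shat 0 with hneg | hpos
      · -- shat < -ε
        have hshat' : shat < -ε := by
          rw [abs_of_nonpos hneg] at hgt; linarith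
        rw [max_eq_right hneg, sub_zero, abs_mul, abs_of_nonneg hσ0]
        have hσE : E / (E + 1) ≤ E := by
          rw [div_le_iff₀ hD]; nlinarith
        have hexp2 : Real.exp (lam * shat) ≤ Real.exp (-(lam * ε)) :=
          Real.exp_le_exp.mpr (by nlinarith [mul_pos hlampos (by linarith : (0:ℝ) < -(shat + ε))])
        have hmul : Real.exp (-(lam * ε)) * Real.exp (lam * ε) = 1 := by
          rw [← Real.exp_add]; simp
        have h7 : Cs * n * Real.exp (-(lam * ε)) ≤ ε := by
          nlinarith [Real.exp_pos (-(lam * ε)), Real.exp_pos (lam * ε)]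
        calc |shat| * (E / (E + 1)) ≤ Cs * (E / (E + 1)) :=
              mul_le_mul_of_nonneg_right hshat hσ0
          _ ≤ Cs * E := mul_le_mul_of_nonneg_left hσE hCs.le
          _ = Cs * n * Real.exp (lam * shat) := by rw [hEdef]; ring
          _ ≤ Cs * n * Real.exp (-(lam * ε)) :=
              mul_le_mul_of_nonneg_left hexp2 (by positivity)
          _ ≤ ε := h7
      · -- shat > ε
        have hshat' : ε < shat := by rwa [abs_of_pos hpos] at hgt
        rw [max_eq_left hpos.le]
        have heq : shat * (E / (E + 1)) - shat = -(shat / (E + 1)) := by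
          field_simp
          ring
        rw [heq, abs_neg, abs_of_nonneg (by positivity)]
        rw [div_le_iff₀ hD]
        have hexp3 : Real.exp (lam * ε) ≤ Real.exp (lam * shat) :=
          Real.exp_le_exp.mpr (mul_le_mul_of_nonneg_left hshat'.le hlampos.le)
        have h5 : Cs * n ≤ ε * Real.exp (lam * shat) :=
          le_trans h4 (mul_le_mul_of_nonneg_left hexp3 hε0.le)
        have h6 : (n:ℝ) * (Cs * n) ≤ n * (ε * Real.exp (lam * shat)) :=
          mul_le_mul_of_nonneg_left h5 (by positivity)
        have hnn : (1:ℝ) ≤ (n:ℝ) * n := by nlinarith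
        have h7 : Cs ≤ (n:ℝ) * (Cs * n) := by nlinarith
        rw [hEdef]
        nlinarith [h6, h7]
  have hmax : |max shat 0 - max s 0| ≤ |shat - s| := abs_max_sub_max_le_abs _ _ _
  have htri : |shat * (E / (E + 1)) - max s 0|
      ≤ |shat * (E / (E + 1)) - max shat 0| + |max shat 0 - max s 0| := abs_sub_le _ _ _
  linarith
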